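/- If A is a faithful finitely generated projective algebra over a commutative ring R, then A admits at most one standard involution, i.e., at most one R-algebra anti-automorphism σ with σ² = id, σ fixing R·1, and such that x + σ(x) ∈ R·1 and x·σ(x) ∈ R·1 for all x ∈ A. -/

import Mathlib

section Aux

open IsLocalRing

private lemma keyLocal {R A : Type*} [CommRing R] [IsLocalRing R] [Ring A] [Algebra R A]
    [Module.Finite R A] [Module.Projective R A]
    (c : A →ₗ[R] R) (h1 : c 1 = 0)
    (hx : ∀ x : A, ∃ r : R, c x • x = algebraMap R A r) : c = 0 := by
  by_cases hA : Subsingleton A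
  · ext x
    rw [Subsingleton.elim x 0, map_zero]; rfl
  rw [not_subsingleton_iff_nontrivial] at hA
  haveI : Module.FinitePresentation R A := Module.finitePresentation_of_projective R A
  haveI : Module.Free R A := Module.free_of_flat_of_isLocalRing
  classical
  let b := Module.Free.chooseBasis R A
  -- find a coordinate of 1 that is a unit
  have h1u : ∃ i, IsUnit (b.repr 1 i) := by
    by_contra h
    push_neg at h
    have hmem : (1 : A) ∈ (maximalIdeal R) • (⊤ : Submodule R A) := by
      rw [← b.sum_repr 1]
      refine Submodule.sum_mem _ fun i _ ↦ Submodule.smul_mem_smul ?_ trivial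
      exact (mem_maximalIdeal _).2 (h i)
    have htop : (⊤ : Submodule R A) ≤ (maximalIdeal R) • (⊤ : Submodule R A) := by
      intro x _
      have : x = (LinearMap.mulLeft R x) 1 := (mul_one x).symm
      rw [this]
      have := Submodule.mem_map_of_mem (f := LinearMap.mulLeft R x) hmem
      rw [Submodule.map_smul''] at this
      exact Submodule.smul_mono le_rfl le_top this
    have := Submodule.eq_bot_of_le_smul_of_le_jacobson_bot (maximalIdeal R) ⊤
      (Module.Finite.fg_top (R := R) (M := A)) htop (maximalIdeal_le_jacobson _)
    exact (not_subsingleton_iff_nontrivial.2 hA)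
      (subsingleton_of_forall_eq 0 fun x ↦ by
        have : x ∈ (⊥ : Submodule R A) := this ▸ Submodule.mem_top
        simpa using this)
  obtain ⟨i₀, hu⟩ := h1u
  -- a functional with f 1 = 1
  let f : A →ₗ[R] R := (hu.unit⁻¹ : Rˣ) • (b.coord i₀)
  have hf1 : f 1 = 1 := by
    simp only [f, LinearMap.smul_apply, Module.Basis.coord_apply, Units.smul_def, smul_eq_mul]
    exact hu.unit.inv_mul
  -- the kernel of f
  set K := LinearMap.ker f with hK
  let g : A →ₗ[R] A := LinearMap.id - (LinearMap.toSpanSingleton R A 1) ∘ₗ f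
  have hg : ∀ x, g x ∈ K := by
    intro x
    simp [g, K, LinearMap.mem_ker, LinearMap.toSpanSingleton_apply, map_smul, hf1, smul_eq_mul]
  let π : A →ₗ[R] K := g.codRestrict K hg
  have hπval : ∀ x : A, (π x : A) = x - f x • 1 := by
    intro x
    simp [π, g, LinearMap.codRestrict, LinearMap.toSpanSingleton_apply]
  have hπ : ∀ k : K, π (k : A) = k := by
    intro k
    apply Subtype.val_injective
    have : f (k : A) = 0 := k.2
    rw [hπval, this, zero_smul, sub_zero]
  haveI : Module.Finite R K :=
    Module.Finite.of_surjective π (fun k => ⟨(k : A), hπ k⟩)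
  haveI : Module.Projective R K :=
    Module.Projective.of_split K.subtype π (by ext k; simpa using hπ k)
  haveI : Module.FinitePresentation R K := Module.finitePresentation_of_projective R K
  haveI : Module.Free R K := Module.free_of_flat_of_isLocalRing
  let bK := Module.Free.chooseBasis R K
  -- c vanishes on K
  have hcK : ∀ k : K, c (k : A) = 0 := by
    suffices h : c ∘ₗ K.subtype = 0 by
      intro k
      have := DFunLike.congr_fun h k
      simpa using this
    refine Module.Basis.ext bK fun j ↦ ?_
    obtain ⟨r, hr⟩ := hx (bK j : A)
    have hfr : f ((bK j : A)) = 0 := (bK j).2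
    have hr0 : r = 0 := by
      have h2 := congrArg f hr
      rw [map_smul, hfr, smul_zero, Algebra.algebraMap_eq_smul_one, map_smul, hf1,
        smul_eq_mul, mul_one] at h2
      exact h2.symm
    rw [hr0, map_zero] at hr
    have hKr : c (bK j : A) • bK j = (0 : K) := by
      apply Subtype.val_injective
      rw [SetLike.val_smul, ZeroMemClass.coe_zero]
      exact hr
    have h3 : bK.repr (c (bK j : A) • bK j) j = bK.repr (0 : K) j := by rw [hKr]
    rw [map_smul, map_zero, Finsupp.smul_apply, Module.Basis.repr_self, Finsupp.single_eq_same,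
      smul_eq_mul, mul_one, Finsupp.zero_apply] at h3
    simpa using h3
  -- conclude
  ext x
  have hdec : x = f x • 1 + ((π x : A)) := by rw [hπval]; abel
  rw [LinearMap.zero_apply]
  calc c x = c (f x • 1 + (π x : A)) := by rw [← hdec]
    _ = f x • c 1 + c ((π x : A)) := by rw [map_add, map_smul]
    _ = 0 := by rw [h1, hcK, smul_zero, add_zero]

private lemma keyGlobal {R A : Type*} [CommRing R] [Ring A] [Algebra R A]
    [Module.Finite R A] [Module.Projective R A]
    (c : A →ₗ[R] R) (h1 : c 1 = 0)
    (hx : ∀ x : A, ∃ r : R, c x • x = algebraMap R A r) : c = 0 := by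
  ext x
  rw [LinearMap.zero_apply]
  refine eq_zero_of_localization (c x) fun P hP => ?_
  letI S := P.primeCompl
  letI Rp := Localization.AtPrime P
  letI Ap := LocalizedModule S A
  letI fA := LocalizedModule.mkLinearMap S A
  letI fR := Algebra.linearMap R Rp
  letI : Algebra Rp Ap := Algebra.ofModule (fun r x y => by
    induction r using Localization.induction_on with | H p => ?_
    induction x using LocalizedModule.induction_on with | h a s => ?_
    induction y using LocalizedModule.induction_on with | h b t => ?_
    obtain ⟨p1, p2⟩ := p
    simp only [S, Rp, Ap, LocalizedModule.mk_smul_mk, LocalizedModule.mk_mul_mk, smul_mul_assoc, mul_assoc])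
    (fun r x y => by
    induction r using Localization.induction_on with | H p => ?_
    induction x using LocalizedModule.induction_on with | h a s => ?_
    induction y using LocalizedModule.induction_on with | h b t => ?_
    obtain ⟨p1, p2⟩ := p
    simp only [S, Rp, Ap, LocalizedModule.mk_smul_mk, LocalizedModule.mk_mul_mk, mul_smul_comm, mul_left_comm])
  haveI : Module.Finite Rp Ap := Module.Finite.of_isLocalizedModule S fA
  haveI : Module.Projective Rp Ap := Module.projective_of_isLocalizedModule S fA
  letI cp : Ap →ₗ[Rp] Rp := IsLocalizedModule.mapExtendScalars S fA fR Rp c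
  have hmk : ∀ y : A, cp (fA y) = algebraMap R Rp (c y) := by
    intro y
    show IsLocalizedModule.map S fA fR c (fA y) = _
    rw [IsLocalizedModule.map_apply]
    rfl
  have hone : (1 : Ap) = fA 1 := by with_unfolding_all rfl
  have hcp1 : cp 1 = 0 := by rw [hone, hmk 1, h1, map_zero]
  have hxp : ∀ z : Ap, ∃ ρ : Rp, cp z • z = algebraMap Rp Ap ρ := by
    intro z
    induction z using LocalizedModule.induction_on with
    | h x s =>
      obtain ⟨r, hr⟩ := hx x
      refine ⟨IsLocalization.mk' Rp r (s * s), ?_⟩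
      set z : Ap := LocalizedModule.mk x s with hz
      have hus : IsUnit (algebraMap R Rp ((s : R) * (s : R))) := by
        simpa using IsLocalization.map_units Rp (s * s)
      rw [← IsUnit.smul_left_cancel hus]
      have hsz : (s : R) • z = fA x := by
        rw [hz, LocalizedModule.smul'_mk]
        exact LocalizedModule.mk_cancel s x
      have hcz : (s : R) • cp z = algebraMap R Rp (c x) := by
        rw [← hmk x, ← hsz, LinearMap.map_smul_of_tower]
      show (algebraMap R Rp ((s : R) * (s : R))) • (cp z • z)
          = (algebraMap R Rp ((s : R) * (s : R))) • algebraMap Rp Ap (IsLocalization.mk' Rp r (s * s))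
      rw [algebraMap_smul, algebraMap_smul]
      calc ((s : R) * (s : R)) • (cp z • z)
          = (s : R) • ((s : R) • (cp z • z)) := by rw [mul_smul]
        _ = (s : R) • (cp z • ((s : R) • z)) := by rw [smul_comm (s : R) (cp z)]
        _ = ((s : R) • cp z) • ((s : R) • z) := by rw [smul_assoc]
        _ = algebraMap R Rp (c x) • fA x := by rw [hcz, hsz]
        _ = (c x) • fA x := by rw [algebraMap_smul]
        _ = fA (c x • x) := by rw [map_smul]
        _ = fA (algebraMap R A r) := by rw [hr]
        _ = ((s : R) * (s : R)) • algebraMap Rp Ap (IsLocalization.mk' Rp r (s * s)) := by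
            rw [Algebra.algebraMap_eq_smul_one (R := Rp) (A := Ap), ← smul_assoc,
              Algebra.smul_def ((s : R) * (s : R)) (IsLocalization.mk' Rp r (s * s))]
            rw [show algebraMap R Rp ((s : R) * (s : R)) * IsLocalization.mk' Rp r (s * s)
                  = algebraMap R Rp r by
                rw [mul_comm]
                have := IsLocalization.mk'_spec Rp r (s * s)
                simpa using this]
            rw [algebraMap_smul, hone, ← map_smul]
            rw [Algebra.algebraMap_eq_smul_one (R := R) (A := A)]
  have := keyLocal cp hcp1 hxp
  rw [← hmk x, this, LinearMap.zero_apply]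

end Aux

/-- A faithful finitely generated projective algebra over a commutative ring admits at most
one standard involution: an `R`-linear anti-automorphism `σ` of order dividing 2 fixing
`R·1` such that `x + σ x` and `x * σ x` lie in `R·1` for all `x`. -/
theorem standard_involution_unique {R A : Type*} [CommRing R] [Ring A] [Algebra R A]
    [Module.Finite R A] [Module.Projective R A] [FaithfulSMul R A]
    (σ τ : A →ₗ[R] A)
    (hσmul : ∀ x y : A, σ (x * y) = σ y * σ x)
    (hσinv : ∀ x : A, σ (σ x) = x)
    (hσalg : ∀ r : R, σ (algebraMap R A r) = algebraMap R A r)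
    (hσtr : ∀ x : A, ∃ r : R, x + σ x = algebraMap R A r)
    (hσnm : ∀ x : A, ∃ r : R, x * σ x = algebraMap R A r)
    (hτmul : ∀ x y : A, τ (x * y) = τ y * τ x)
    (hτinv : ∀ x : A, τ (τ x) = x)
    (hτalg : ∀ r : R, τ (algebraMap R A r) = algebraMap R A r)
    (hτtr : ∀ x : A, ∃ r : R, x + τ x = algebraMap R A r)
    (hτnm : ∀ x : A, ∃ r : R, x * τ x = algebraMap R A r) :
    σ = τ := by
  have inj : Function.Injective (algebraMap R A) := by
    intro r r' h
    refine eq_of_smul_eq_smul (M := R) (α := A) fun a => ?_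
    rw [Algebra.smul_def, Algebra.smul_def, h]
  have hD : ∀ x : A, ∃ r : R, σ x - τ x = algebraMap R A r := by
    intro x
    obtain ⟨a, ha⟩ := hσtr x
    obtain ⟨b, hb⟩ := hτtr x
    exact ⟨a - b, by rw [map_sub, ← ha, ← hb, add_sub_add_left_eq_sub]⟩
  choose d hd using hD
  let c : A →ₗ[R] R :=
    { toFun := d
      map_add' := by
        intro x y
        apply inj
        rw [map_add, ← hd, ← hd, ← hd, map_add, map_add]
        abel
      map_smul' := by
        intro r x
        apply inj
        rw [RingHom.id_apply, smul_eq_mul, map_mul, ← Algebra.smul_def, ← hd, ← hd,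
          map_smul, map_smul, smul_sub] }
  have h1 : c 1 = 0 := by
    apply inj
    show algebraMap R A (d 1) = _
    rw [← hd, map_zero]
    have h1a : (1 : A) = algebraMap R A 1 := (map_one _).symm
    rw [h1a, hσalg, hτalg, sub_self]
  have hx : ∀ x : A, ∃ r : R, c x • x = algebraMap R A r := by
    intro x
    obtain ⟨t1, ht1⟩ := hσtr x
    obtain ⟨n1, hn1⟩ := hσnm x
    obtain ⟨t2, ht2⟩ := hτtr x
    obtain ⟨n2, hn2⟩ := hτnm x
    have hσx : σ x = algebraMap R A t1 - x := by rw [← ht1]; abel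
    have hτx : τ x = algebraMap R A t2 - x := by rw [← ht2]; abel
    have e1 : x * x = t1 • x - algebraMap R A n1 := by
      have := hn1
      rw [hσx, mul_sub, ← Algebra.commutes t1 x, ← Algebra.smul_def] at this
      linear_combination (norm := (push_cast; abel)) -this
    have e2 : x * x = t2 • x - algebraMap R A n2 := by
      have := hn2
      rw [hτx, mul_sub, ← Algebra.commutes t2 x, ← Algebra.smul_def] at this
      linear_combination (norm := (push_cast; abel)) -this
    have hdx : d x = t1 - t2 := by
      apply inj
      rw [← hd, hσx, hτx, map_sub]
      abel
    refine ⟨n1 - n2, ?_⟩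
    show d x • x = _
    rw [hdx, sub_smul, map_sub]
    rw [e1] at e2
    -- e2 : t1 • x - algebraMap R A n1 = t2 • x - algebraMap R A n2
    linear_combination (norm := abel) e2
  have hc : c = 0 := keyGlobal c h1 hx
  ext x
  have : σ x - τ x = 0 := by
    rw [hd x]
    show algebraMap R A (c x) = 0
    rw [hc, LinearMap.zero_apply, map_zero]
  exact sub_eq_zero.mp this
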